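/- Let p > q be primes, q dividing p − 1, a ∈ (Z/pZ)^* of order q, and G = (Z_p × Z_p) ⋊_φ Z_q with φ_z acting as scalar multiplication by a^z. Then G contains no element of order p·q. -/

import Mathlib

/-- Let `p > q` be primes, `q ∣ p - 1`, `a ∈ (ℤ/pℤ)ˣ` of order `q`, and
`G = (ℤ_p × ℤ_p) ⋊_φ ℤ_q` with `φ z` acting as scalar multiplication by `a ^ z`.
Then `G` contains no element of order `p * q`. -/
theorem stmt_12 (p q : ℕ) [Fact p.Prime] [Fact q.Prime] (hpq : q < p) (hdvd : q ∣ p - 1)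
    (a : (ZMod p)ˣ) (ha : orderOf a = q)
    (φ : Multiplicative (ZMod q) →* MulAut (Multiplicative (ZMod p × ZMod p)))
    (hφ : ∀ (z : Multiplicative (ZMod q)) (x : Multiplicative (ZMod p × ZMod p)),
      Multiplicative.toAdd (φ z x) =
        ((a : ZMod p) ^ (Multiplicative.toAdd z).val) • Multiplicative.toAdd x) :
    ∀ g : Multiplicative (ZMod p × ZMod p) ⋊[φ] Multiplicative (ZMod q),
      orderOf g ≠ p * q := by
  intro g hg
  have hp : p.Prime := Fact.out
  have hq : q.Prime := Fact.out
  have hp0 : 0 < p := hp.pos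
  have hq0 : 0 < q := hq.pos
  have hpowright : ∀ n : ℕ, (g ^ n).right = (g.right) ^ n := by
    intro n
    rw [← SemidirectProduct.rightHom_eq_right]
    exact map_pow SemidirectProduct.rightHom g n
  have hqright : (g ^ q).right = 1 := by
    rw [hpowright, ← ofAdd_toAdd (g.right ^ q), toAdd_pow]
    simp [nsmul_eq_mul, ZMod.natCast_self]
  have hgq_ne : g ^ q ≠ 1 := by
    intro h
    have := orderOf_dvd_of_pow_eq_one h
    rw [hg] at this
    have := Nat.le_of_dvd hq0 this
    nlinarith [hp.two_le, hq.two_le]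
  have hy_ne : Multiplicative.toAdd (g ^ q).left ≠ (0 : ZMod p × ZMod p) := by
    intro h
    apply hgq_ne
    ext : 1
    · simpa using h
    · simpa using hqright
  have hcomm : g ^ p * g ^ q = g ^ q * g ^ p := ((Commute.refl g).pow_pow p q).eq
  have hleft : (g ^ p * g ^ q).left = (g ^ q * g ^ p).left := by rw [hcomm]
  rw [SemidirectProduct.mul_left, SemidirectProduct.mul_left, hqright, map_one] at hleft
  simp only [MulAut.one_apply] at hleft
  have hfix : φ (g ^ p).right (g ^ q).left = (g ^ q).left := by
    have h2 : (g ^ p).left * φ (g ^ p).right (g ^ q).left = (g ^ p).left * (g ^ q).left := by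
      rw [hleft, mul_comm]
    exact mul_left_cancel h2
  have hsc : ((a : ZMod p) ^ (Multiplicative.toAdd (g ^ p).right).val) •
      Multiplicative.toAdd (g ^ q).left = Multiplicative.toAdd (g ^ q).left := by
    rw [← hφ, hfix]
  set c : ZMod p := (a : ZMod p) ^ (Multiplicative.toAdd (g ^ p).right).val with hc
  set y : ZMod p × ZMod p := Multiplicative.toAdd (g ^ q).left with hyd
  have hc1 : c = 1 := by
    have h1 : c * y.1 = y.1 := by simpa using congrArg Prod.fst hsc
    have h2 : c * y.2 = y.2 := by simpa using congrArg Prod.snd hsc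
    have hy' : y.1 ≠ 0 ∨ y.2 ≠ 0 := by
      by_contra h
      push_neg at h
      exact hy_ne (Prod.ext h.1 h.2)
    rcases hy' with h | h
    · exact mul_right_cancel₀ h (h1.trans (one_mul y.1).symm)
    · exact mul_right_cancel₀ h (h2.trans (one_mul y.2).symm)
  have hunit : a ^ (Multiplicative.toAdd (g ^ p).right).val = 1 := by
    ext
    simpa [hc] using hc1
  have hdvd2 : q ∣ (Multiplicative.toAdd (g ^ p).right).val := by
    have := orderOf_dvd_of_pow_eq_one hunit
    rwa [ha] at this
  have hval0 : (Multiplicative.toAdd (g ^ p).right).val = 0 :=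
    Nat.eq_zero_of_dvd_of_lt hdvd2 (ZMod.val_lt _)
  have hzeq : Multiplicative.toAdd (g ^ p).right = 0 :=
    (ZMod.val_eq_zero _).mp hval0
  -- deduce toAdd g.right = 0
  have hz0 : Multiplicative.toAdd g.right = 0 := by
    have : (p : ZMod q) * Multiplicative.toAdd g.right = 0 := by
      have := hzeq
      rw [hpowright, toAdd_pow, nsmul_eq_mul] at this
      simpa using this
    have hpne : (p : ZMod q) ≠ 0 := by
      rw [Ne, ZMod.natCast_eq_zero_iff]
      intro hqp
      rcases (Nat.prime_dvd_prime_iff_eq hq hp).mp hqp with rfl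
      exact lt_irrefl _ hpq
    exact (mul_eq_zero.mp this).resolve_left hpne
  have hgr1 : g.right = 1 := by
    have : Multiplicative.toAdd g.right = Multiplicative.toAdd (1 : Multiplicative (ZMod q)) := by
      simpa using hz0
    exact Multiplicative.toAdd.injective this
  -- now left powers
  have hleftpow : ∀ n : ℕ, (g ^ n).left = g.left ^ n := by
    intro n
    induction n with
    | zero => simp
    | succ n ih =>
      rw [pow_succ, SemidirectProduct.mul_left, ih, hpowright, hgr1, one_pow, map_one,
        MulAut.one_apply, ← pow_succ]
  have hgp1 : g ^ p = 1 := by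
    ext : 1
    · rw [hleftpow, ← ofAdd_toAdd (g.left ^ p), toAdd_pow]
      have h1 : p • Multiplicative.toAdd g.left = (0 : ZMod p × ZMod p) := by
        ext
        · simp [nsmul_eq_mul, ZMod.natCast_self]
        · simp [nsmul_eq_mul, ZMod.natCast_self]
      rw [h1]
      rfl
    · rw [hpowright, hgr1, one_pow]; simp
  have := orderOf_dvd_of_pow_eq_one hgp1
  rw [hg] at this
  have := Nat.le_of_dvd hp0 this
  nlinarith [hq.two_le]
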